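/- In a monotonic automaton with states ordered q₁ < ... < qₙ, if a subset S of states can be mapped by some word to a state q strictly below min S (or strictly above max S), then S is synchronizing and, provided every state can reach q by taking transitions only toward smaller (respectively larger) states, S can be synchronized by a word of length at most n − 1. -/
import Mathlib

section Aux

variable {Q A : Type*} [Fintype Q] [LinearOrder Q]

private lemma foldl_mono (δ : Q → A → Q) (hmono : ∀ x : A, Monotone (fun q => δ q x))
    (w : List A) : Monotone (fun p => w.foldl δ p) := by
  induction w with
  | nil => exact monotone_id
  | cons a t ih =>
    intro p p' hpp'
    exact ih (hmono a hpp')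

private lemma q_le_of_reach (δ : Q → A → Q) (q p : Q) (w : List A)
    (hw : w.foldl δ p = q)
    (hstep : ∀ i < w.length, (w.take (i + 1)).foldl δ p ≤ (w.take i).foldl δ p) :
    q ≤ p := by
  have key : ∀ i, (w.take i).foldl δ p ≤ p := by
    intro i
    induction i with
    | zero => simp
    | succ j ih =>
      by_cases h : j < w.length
      · exact (hstep j h).trans ih
      · have : w.take (j + 1) = w.take j := by
          rw [List.take_of_length_le (by omega), List.take_of_length_le (by omega)]
        rw [this]; exact ih
  have := key w.length
  rwa [List.take_length, hw] at this

private lemma shorten (δ : Q → A → Q) (q : Q) :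
    ∀ (w : List A) (p : Q), w.foldl δ p = q →
    (∀ i < w.length, (w.take (i + 1)).foldl δ p ≤ (w.take i).foldl δ p) →
    ∃ w' : List A, w'.foldl δ p = q ∧
      w'.length ≤ (Finset.univ.filter (· < p)).card := by
  intro w
  induction w with
  | nil =>
    intro p hw _
    exact ⟨[], hw, by simp⟩
  | cons a t ih =>
    intro p hw hstep
    have h0 : δ p a ≤ p := by
      have := hstep 0 (by simp)
      simpa using this
    have hstep' : ∀ i < t.length,
        (t.take (i + 1)).foldl δ (δ p a) ≤ (t.take i).foldl δ (δ p a) := by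
      intro i hi
      have := hstep (i + 1) (by simpa using Nat.succ_lt_succ hi)
      simpa [List.take_succ_cons] using this
    have hw' : t.foldl δ (δ p a) = q := by simpa using hw
    rcases eq_or_lt_of_le h0 with heq | hlt
    · rw [heq] at hw' hstep'
      exact ih p hw' hstep'
    · obtain ⟨w', hw'q, hlen⟩ := ih (δ p a) hw' hstep'
      refine ⟨a :: w', by simpa using hw'q, ?_⟩
      have hcard : (Finset.univ.filter (· < δ p a)).card <
          (Finset.univ.filter (· < p)).card := by
        apply Finset.card_lt_card
        constructor
        · intro x hx
          simp only [Finset.mem_filter, Finset.mem_univ, true_and] at hx ⊢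
          exact hx.trans hlt
        · intro hsub
          have : δ p a ∈ Finset.univ.filter (· < δ p a) :=
            hsub (by simp [hlt])
          simp at this
      simpa using Nat.succ_le_of_lt (Nat.lt_of_le_of_lt hlen hcard)

private lemma key {n : ℕ} (hn : Fintype.card Q = n)
    (δ : Q → A → Q) (hmono : ∀ x : A, Monotone (fun q => δ q x))
    (S : Set Q) (q : Q)
    (hreach : ∀ p : Q, ∃ w : List A, w.foldl δ p = q ∧
      ∀ i < w.length, (w.take (i + 1)).foldl δ p ≤ (w.take i).foldl δ p) :
    ∃ (w : List A) (p : Q), (∀ s ∈ S, w.foldl δ s = p) ∧ w.length ≤ n - 1 := by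
  have hqle : ∀ p : Q, q ≤ p := by
    intro p
    obtain ⟨w, hw, hs⟩ := hreach p
    exact q_le_of_reach δ q p w hw hs
  by_cases hS : S.Nonempty
  · have hfin : S.toFinite.toFinset.Nonempty := by
      rwa [Set.Finite.toFinset_nonempty]
    set m := S.toFinite.toFinset.max' hfin with hm
    obtain ⟨w0, hw0, hs0⟩ := hreach m
    obtain ⟨w, hwq, hwlen⟩ := shorten δ q w0 m hw0 hs0
    refine ⟨w, q, ?_, ?_⟩
    · intro s hs
      have hsm : s ≤ m := S.toFinite.toFinset.le_max' s (S.toFinite.mem_toFinset.mpr hs)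
      have h1 : w.foldl δ s ≤ q := by
        have := foldl_mono δ hmono w hsm
        simpa [hwq] using this
      exact le_antisymm h1 (hqle _)
    · refine hwlen.trans ?_
      have : (Finset.univ.filter (· < m)).card ≤ (Finset.univ.erase m).card := by
        apply Finset.card_le_card
        intro x hx
        simp only [Finset.mem_filter, Finset.mem_univ, true_and] at hx
        exact Finset.mem_erase.mpr ⟨ne_of_lt hx, Finset.mem_univ x⟩
      rw [Finset.card_erase_of_mem (Finset.mem_univ m), Finset.card_univ, hn] at this
      exact this
  · refine ⟨[], q, ?_, by simp⟩
    intro s hs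
    exact absurd ⟨s, hs⟩ hS

end Aux

/-- In a monotonic `n`-state automaton: if a subset `S` can be mapped by some
word to a state `q` strictly below `min S` (respectively strictly above
`max S`), then `S` is synchronizing, and provided every state can reach `q` by
taking transitions only toward smaller (respectively larger) states, `S` can
be synchronized by a word of length at most `n - 1`. -/
theorem stmt16 {Q A : Type*} [Fintype Q] [LinearOrder Q] {n : ℕ}
    (hn : Fintype.card Q = n)
    (δ : Q → A → Q) (hmono : ∀ x : A, Monotone (fun q => δ q x))
    (S : Set Q) (q : Q) :
    ((∃ w : List A, ∀ s ∈ S, w.foldl δ s = q) → (∀ s ∈ S, q < s) →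
      ((∃ (w : List A) (p : Q), ∀ s ∈ S, w.foldl δ s = p) ∧
        ((∀ p : Q, ∃ w : List A, w.foldl δ p = q ∧
            ∀ i < w.length, (w.take (i + 1)).foldl δ p ≤ (w.take i).foldl δ p) →
          ∃ (w : List A) (p : Q), (∀ s ∈ S, w.foldl δ s = p) ∧ w.length ≤ n - 1))) ∧
    ((∃ w : List A, ∀ s ∈ S, w.foldl δ s = q) → (∀ s ∈ S, s < q) →
      ((∃ (w : List A) (p : Q), ∀ s ∈ S, w.foldl δ s = p) ∧
        ((∀ p : Q, ∃ w : List A, w.foldl δ p = q ∧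
            ∀ i < w.length, (w.take i).foldl δ p ≤ (w.take (i + 1)).foldl δ p) →
          ∃ (w : List A) (p : Q), (∀ s ∈ S, w.foldl δ s = p) ∧ w.length ≤ n - 1))) := by
  constructor
  · intro hsync _
    refine ⟨⟨hsync.choose, q, hsync.choose_spec⟩, ?_⟩
    intro hreach
    exact key hn δ hmono S q hreach
  · intro hsync _
    refine ⟨⟨hsync.choose, q, hsync.choose_spec⟩, ?_⟩
    intro hreach
    have hn' : Fintype.card Qᵒᵈ = n := hn
    exact key (Q := Qᵒᵈ) hn' δ (fun x => (hmono x).dual) S q hreach
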